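/- Let m ≥ 3. There exist linearly independent vectors Q_1,…,Q_m ∈ ℂ^{m+1} and a plane W ⊆ ℂ^{m+1} (3-dimensional linear subspace) containing Q_2 and Q_3, such that the ℂ-vector space of forms of degree m in m+1 variables vanishing to order ≥ m−1 at each point [Q_i] and vanishing identically on W (i.e. F(w) = 0 for all w ∈ W) has dimension exactly 2^m − 4. -/

import Mathlib

open MvPolynomial

/-- Composition of partial derivatives along a list of variable indices. -/
noncomputable def derivMap {N : ℕ} (l : List (Fin N)) :
    MvPolynomial (Fin N) ℂ →ₗ[ℂ] MvPolynomial (Fin N) ℂ :=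
  l.foldr (fun i f => (pderiv i).toLinearMap.comp f) LinearMap.id

/-- The subspace of polynomials vanishing to order ≥ k at the point `a`,
i.e. all iterated partial derivatives of total order ≤ k-1 vanish at `a`. -/
noncomputable def vanishingSubmodule {N : ℕ} (a : Fin N → ℂ) (k : ℕ) :
    Submodule ℂ (MvPolynomial (Fin N) ℂ) :=
  ⨅ (l : List (Fin N)) (_ : l.length < k),
    LinearMap.ker ((aeval a).toLinearMap.comp (derivMap l))

/-- The subspace of polynomials vanishing identically on a linear subspace `W`. -/
noncomputable def vanishOnSubmodule {N : ℕ} (W : Submodule ℂ (Fin N → ℂ)) :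
    Submodule ℂ (MvPolynomial (Fin N) ℂ) :=
  ⨅ (w : W), LinearMap.ker ((aeval (w : Fin N → ℂ)).toLinearMap)

/-- count finsupp of a list -/
noncomputable def lcount {N : ℕ} (l : List (Fin N)) : Fin N →₀ ℕ :=
  (l.map fun j => Finsupp.single j 1).sum

lemma lcount_nil {N : ℕ} : lcount ([] : List (Fin N)) = 0 := rfl

lemma lcount_cons {N : ℕ} (a : Fin N) (l : List (Fin N)) :
    lcount (a :: l) = Finsupp.single a 1 + lcount l := by
  simp [lcount]

lemma lcount_apply {N : ℕ} (l : List (Fin N)) (j : Fin N) :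
    lcount l j = l.count j := by
  induction l with
  | nil => simp [lcount_nil]
  | cons a l ih =>
    rw [lcount_cons]
    simp only [Finsupp.add_apply, ih, List.count_cons, Finsupp.single_apply, beq_iff_eq]
    omega

lemma derivMap_nil {N : ℕ} (F : MvPolynomial (Fin N) ℂ) : derivMap [] F = F := rfl

lemma derivMap_cons {N : ℕ} (a : Fin N) (l : List (Fin N)) (F : MvPolynomial (Fin N) ℂ) :
    derivMap (a :: l) F = pderiv a (derivMap l F) := rfl

lemma derivMap_monomial {N : ℕ} (l : List (Fin N)) (d : Fin N →₀ ℕ) (c : ℂ) :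
    ∃ k : ℕ, derivMap l (monomial d c) = monomial (d - lcount l) ((k : ℂ) * c) ∧
      ((∀ j, l.count j ≤ d j) → 0 < k) ∧ (¬ (∀ j, l.count j ≤ d j) → k = 0) := by
  induction l with
  | nil =>
    refine ⟨1, by simp [derivMap_nil, lcount_nil], fun _ => one_pos, fun h => absurd (by simp) h⟩
  | cons a l ih =>
    obtain ⟨k, hk, hpos, hzero⟩ := ih
    refine ⟨(d a - l.count a) * k, ?_, ?_, ?_⟩
    · rw [derivMap_cons, hk, pderiv_monomial, lcount_cons]
      congr 1
      · rw [add_comm, tsub_add_eq_tsub_tsub]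
      · rw [Finsupp.tsub_apply, lcount_apply]
        push_cast
        ring
    · intro h
      have h1 : ∀ j, l.count j ≤ d j := fun j => le_trans (List.count_le_count_cons (a := j) (b := a) (l := l)) (h j)
      have h2 := h a
      rw [List.count_cons_self] at h2
      have := hpos h1
      have : 0 < d a - l.count a := by omega
      positivity
    · intro h
      by_cases h1 : ∀ j, l.count j ≤ d j
      · have : ¬ (List.count a (a :: l) ≤ d a) := by
          intro hc
          apply h
          intro j
          rcases eq_or_ne j a with rfl | hj
          · exact hc
          · rw [List.count_cons_of_ne hj.symm]; exact h1 j
        rw [List.count_cons_self] at this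
        have : d a - l.count a = 0 := by omega
        rw [this, zero_mul]
      · rw [hzero h1, mul_zero]

/-- indicator vector of a finset of coordinates -/
noncomputable def ind {N : ℕ} (A : Finset (Fin N)) : Fin N → ℂ :=
  fun j => if j ∈ A then 1 else 0

lemma aeval_ind_monomial {N : ℕ} (A : Finset (Fin N)) (d : Fin N →₀ ℕ) (c : ℂ) :
    aeval (ind A) (monomial d c) = if d.support ⊆ A then c else 0 := by
  rw [aeval_monomial]
  by_cases h : d.support ⊆ A
  · rw [if_pos h]
    have : (d.prod fun i k => ind A i ^ k) = 1 := by
      apply Finset.prod_eq_one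
      intro i hi
      simp only [ind, if_pos (h hi), one_pow]
    rw [this]
    simp
  · rw [if_neg h]
    obtain ⟨i, hi, hiA⟩ := Finset.not_subset.mp h
    have : (d.prod fun i k => ind A i ^ k) = 0 := by
      apply Finset.prod_eq_zero hi
      simp only [ind, if_neg hiA]
      exact zero_pow (Finsupp.mem_support_iff.mp hi)
    rw [this, mul_zero]

lemma single_eq_ind {N : ℕ} (i : Fin N) : Pi.single i (1:ℂ) = ind {i} := by
  ext j
  rw [Pi.single_apply, ind]
  simp [eq_comm]

lemma mem_vanishingSubmodule {N : ℕ} (a : Fin N → ℂ) (k : ℕ) (F : MvPolynomial (Fin N) ℂ) :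
    F ∈ vanishingSubmodule a k ↔ ∀ l : List (Fin N), l.length < k → aeval a (derivMap l F) = 0 := by
  simp [vanishingSubmodule, Submodule.mem_iInf, LinearMap.mem_ker]

lemma mem_vanishOnSubmodule {N : ℕ} (W : Submodule ℂ (Fin N → ℂ)) (F : MvPolynomial (Fin N) ℂ) :
    F ∈ vanishOnSubmodule W ↔ ∀ w ∈ W, aeval w F = 0 := by
  simp [vanishOnSubmodule, Submodule.mem_iInf, LinearMap.mem_ker]

lemma sum_count_eq_length {N : ℕ} (l : List (Fin N)) :
    ∑ j : Fin N, l.count j = l.length := by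
  induction l with
  | nil => simp
  | cons a l ih =>
    simp only [List.count_cons, List.length_cons, ← ih, Finset.sum_add_distrib, beq_iff_eq]
    congr 1
    simp

lemma degree_sum_eq {N n : ℕ} {F : MvPolynomial (Fin N) ℂ} (hhom : F.IsHomogeneous n)
    {d : Fin N →₀ ℕ} (hd : d ∈ F.support) : ∑ j : Fin N, d j = n := by
  have h1 : d.degree = n := by
    rw [Finsupp.degree_eq_weight_one]
    exact hhom (Finsupp.mem_support_iff.mp hd)
  rw [← h1, Finsupp.degree]
  exact (Finset.sum_subset (Finset.subset_univ _)
    (fun x _ hx => Finsupp.notMem_support_iff.mp hx)).symm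

lemma aeval_derivMap_sum {N : ℕ} (v : Fin N → ℂ) (l : List (Fin N)) (F : MvPolynomial (Fin N) ℂ) :
    aeval v (derivMap l F) = ∑ d ∈ F.support, aeval v (derivMap l (monomial d (coeff d F))) := by
  conv_lhs => rw [F.as_sum, map_sum, map_sum]

/-- hard direction: vanishing to high order forces small exponents -/
lemma exponent_le_one {N n : ℕ} (hn : 2 ≤ n) (i : Fin N) (F : MvPolynomial (Fin N) ℂ)
    (hhom : F.IsHomogeneous n) (hvan : F ∈ vanishingSubmodule (Pi.single i 1) (n - 1))
    {d : Fin N →₀ ℕ} (hd : d ∈ F.support) : d i ≤ 1 := by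
  by_contra hcon
  push_neg at hcon
  set e : Fin N →₀ ℕ := d - Finsupp.single i 2 with he
  have he_apply : ∀ j, e j = if j = i then d i - 2 else d j := by
    intro j
    rw [he, Finsupp.tsub_apply, Finsupp.single_apply]
    split
    · simp_all
    · next h => rw [if_neg (fun h' : j = i => h h'.symm)]; simp
  set l : List (Fin N) := e.toMultiset.toList with hl
  have hcount : ∀ j, l.count j = e j := by
    intro j
    rw [hl, ← Multiset.coe_count, Multiset.coe_toList, Finsupp.count_toMultiset]
  have hsum : ∑ j : Fin N, d j = n := degree_sum_eq hhom hd
  have hlen : l.length = n - 2 := by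
    rw [hl, Multiset.length_toList]
    rw [Finsupp.card_toMultiset]
    have : (e.sum fun _ x => id x) = ∑ j : Fin N, e j := by
      rw [Finsupp.sum]
      exact Finset.sum_subset (Finset.subset_univ _)
        (fun x _ hx => Finsupp.notMem_support_iff.mp hx)
    rw [this]
    have hde : ∀ j, d j = e j + (if j = i then 2 else 0) := by
      intro j
      rw [he_apply]
      split
      · next h => subst h; omega
      · omega
    have h2 : ∑ j : Fin N, d j = (∑ j : Fin N, e j) + 2 := by
      rw [Finset.sum_congr rfl (fun j _ => hde j), Finset.sum_add_distrib,
        Finset.sum_ite_eq' Finset.univ i (fun _ => 2), if_pos (Finset.mem_univ i)]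
    omega
  -- use the vanishing condition with list l
  have hvancond := (mem_vanishingSubmodule _ _ _).mp hvan l (by omega)
  rw [aeval_derivMap_sum] at hvancond
  -- all terms except d vanish
  have hterm : ∀ d' ∈ F.support, d' ≠ d →
      aeval (Pi.single i (1:ℂ)) (derivMap l (monomial d' (coeff d' F))) = 0 := by
    intro d' hd' hne
    obtain ⟨k, hk, hpos, hzero⟩ := derivMap_monomial l d' (coeff d' F)
    rw [hk, single_eq_ind, aeval_ind_monomial]
    by_cases hcnt : ∀ j, l.count j ≤ d' j
    · rw [if_neg]
      intro hsupp
      -- then for j ≠ i, d' j = l.count j = e j = d j; and sums equal force d' = d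
      apply hne
      have hoff : ∀ j, j ≠ i → d' j = d j := by
        intro j hj
        have h0 : (d' - lcount l) j = 0 := by
          by_contra h0
          have : j ∈ (d' - lcount l).support := Finsupp.mem_support_iff.mpr h0
          have := hsupp this
          simp at this
          exact hj this
        rw [Finsupp.tsub_apply, lcount_apply] at h0
        have h3 := hcnt j
        have h4 : l.count j = e j := hcount j
        rw [he_apply j, if_neg hj] at h4
        omega
      have hsum' : ∑ j : Fin N, d' j = n := degree_sum_eq hhom hd'
      have hii : d' i = d i := by
        have h5 : ∑ j : Fin N, d' j = ∑ j : Fin N, d j := by rw [hsum', hsum]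
        have h6 : ∀ j ∈ Finset.univ.erase i, d' j = d j := fun j hj =>
          hoff j (Finset.mem_erase.mp hj).1
        have h7 : ∑ x ∈ Finset.univ.erase i, d' x = ∑ x ∈ Finset.univ.erase i, d x :=
          Finset.sum_congr rfl h6
        rw [← Finset.add_sum_erase _ _ (Finset.mem_univ i),
          ← Finset.add_sum_erase _ (fun j => d j) (Finset.mem_univ i)] at h5
        omega
      ext j
      rcases eq_or_ne j i with rfl | hj
      · exact hii
      · exact hoff j hj
    · simp [hzero hcnt]
  rw [Finset.sum_eq_single_of_mem d hd hterm] at hvancond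
  obtain ⟨k, hk, hpos, _⟩ := derivMap_monomial l d (coeff d F)
  have hexp : d - lcount l = Finsupp.single i 2 := by
    ext j
    rw [Finsupp.tsub_apply, lcount_apply, hcount, he_apply, Finsupp.single_apply]
    rcases eq_or_ne j i with rfl | hj
    · simp; omega
    · rw [if_neg hj, if_neg (fun h => hj h.symm)]; omega
  rw [hk, hexp, single_eq_ind, aeval_ind_monomial, if_pos] at hvancond
  · have hkpos : 0 < k := by
      apply hpos
      intro j
      rw [hcount, he_apply]
      split
      · next h => subst h; omega
      · omega
    have : coeff d F = 0 := by
      have hk0 : (k : ℂ) ≠ 0 := Nat.cast_ne_zero.mpr hkpos.ne'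
      rcases mul_eq_zero.mp hvancond with h | h
      · exact absurd h hk0
      · exact h
    exact Finsupp.mem_support_iff.mp hd this
  · rw [Finsupp.support_single_ne_zero i (by norm_num : (2:ℕ) ≠ 0)]

/-- easy direction: monomials with small exponent at `i` vanish to high order at `e_i` -/
lemma monomial_mem_vanishing {N n : ℕ} (i : Fin N) (d : Fin N →₀ ℕ) (c : ℂ)
    (hsum : ∑ j : Fin N, d j = n) (hdi : d i ≤ 1) :
    monomial d c ∈ vanishingSubmodule (Pi.single i 1) (n - 1) := by
  rw [mem_vanishingSubmodule]
  intro l hlen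
  obtain ⟨k, hk, hpos, hzero⟩ := derivMap_monomial l d c
  rw [hk, single_eq_ind, aeval_ind_monomial]
  by_cases hcnt : ∀ j, l.count j ≤ d j
  · rw [if_neg]
    intro hsupp
    have hle : ∀ j, d j ≤ l.count j + (if j = i then 1 else 0) := by
      intro j
      rcases eq_or_ne j i with rfl | hj
      · rw [if_pos rfl]; omega
      · rw [if_neg hj]
        have h0 : (d - lcount l) j = 0 := by
          by_contra h0
          have := hsupp (Finsupp.mem_support_iff.mpr h0)
          simp at this
          exact hj this
        rw [Finsupp.tsub_apply, lcount_apply] at h0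
        have := hcnt j
        omega
    have hnle : n ≤ l.length + 1 := by
      calc n = ∑ j : Fin N, d j := hsum.symm
        _ ≤ ∑ j : Fin N, (l.count j + if j = i then 1 else 0) :=
          Finset.sum_le_sum (fun j _ => hle j)
        _ = l.length + 1 := by
          rw [Finset.sum_add_distrib, sum_count_eq_length,
            Finset.sum_ite_eq' Finset.univ i (fun _ => 1), if_pos (Finset.mem_univ i)]
    omega
  · simp [hzero hcnt]


set_option maxHeartbeats 3200000 in
theorem stmt13 (m : ℕ) (hm : 3 ≤ m) :
    ∃ (Q : Fin m → (Fin (m + 1) → ℂ)) (W : Submodule ℂ (Fin (m + 1) → ℂ)),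
      LinearIndependent ℂ Q ∧
      Module.finrank ℂ W = 3 ∧
      Q ⟨1, by omega⟩ ∈ W ∧ Q ⟨2, by omega⟩ ∈ W ∧
      (Module.finrank ℂ
        ↥(homogeneousSubmodule (Fin (m + 1)) ℂ m ⊓
          (⨅ i, vanishingSubmodule (Q i) (m - 1)) ⊓
          vanishOnSubmodule W) : ℤ)
        = 2 ^ m - 4 := by
  classical
  set N := m + 1
  -- special coordinates
  set la : Fin N := Fin.last m with hla
  set c1 : Fin N := (⟨1, by omega⟩ : Fin m).castSucc with hc1
  set c2 : Fin N := (⟨2, by omega⟩ : Fin m).castSucc with hc2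
  have hc1la : c1 ≠ la := (Fin.castSucc_lt_last _).ne
  have hc2la : c2 ≠ la := (Fin.castSucc_lt_last _).ne
  have hc12 : c1 ≠ c2 := by
    simp only [hc1, hc2, Fin.castSucc_inj]
    intro h
    have := congrArg Fin.val h
    simp at this
  set A : Finset (Fin N) := {c1, c2, la} with hA
  -- the points and the plane
  set Q : Fin m → (Fin N → ℂ) := fun i => Pi.single i.castSucc 1 with hQ
  set g : Fin 3 → Fin N := ![c1, c2, la] with hg
  have hginj : Function.Injective g := by
    intro a b hab
    fin_cases a <;> fin_cases b <;> simp_all [hg]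
  set W : Submodule ℂ (Fin N → ℂ) := Submodule.span ℂ (Set.range fun j => Pi.single (g j) (1:ℂ))
    with hW
  refine ⟨Q, W, ?_, ?_, ?_, ?_, ?_⟩
  · -- linear independence of Q
    have := (Pi.basisFun ℂ (Fin N)).linearIndependent
    have h2 := this.comp Fin.castSucc (Fin.castSucc_injective m)
    convert h2 using 1
    funext i
    simp [hQ, Function.comp]
  · -- finrank W = 3
    have hli : LinearIndependent ℂ fun j => (Pi.single (g j) 1 : Fin N → ℂ) := by
      have := (Pi.basisFun ℂ (Fin N)).linearIndependent.comp g hginj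
      convert this using 1
      funext j
      simp [Function.comp]
    rw [hW, finrank_span_eq_card hli]
    simp
  · -- Q 1 ∈ W
    exact Submodule.subset_span ⟨0, by simp [hg, hQ, hc1]⟩
  · -- Q 2 ∈ W
    exact Submodule.subset_span ⟨1, by simp [hg, hQ, hc2]⟩
  -- the main dimension computation
  · -- basic coordinate facts
    have hcsne : ∀ i : Fin m, i.castSucc ≠ la := fun i => (Fin.castSucc_lt_last i).ne
    -- the exponent map
    set φ : Finset (Fin m) → (Fin N →₀ ℕ) := fun S => Finsupp.equivFunOnFinite.symm
      (fun j => if h : j = la then m - S.card else (if j.castPred h ∈ S then 1 else 0)) with hφ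
    have hφ_apply : ∀ S j, φ S j =
        if h : j = la then m - S.card else (if j.castPred h ∈ S then 1 else 0) := fun S j => rfl
    have hφ_cs : ∀ S (i : Fin m), φ S i.castSucc = if i ∈ S then 1 else 0 := by
      intro S i
      rw [hφ_apply, dif_neg (hcsne i)]
      simp
      congr
    have hφ_la : ∀ S, φ S la = m - S.card := by
      intro S
      rw [hφ_apply, dif_pos rfl]
    have hφ_sum : ∀ S : Finset (Fin m), ∑ j : Fin N, φ S j = m := by
      intro S
      rw [Fin.sum_univ_castSucc]
      have h1 : ∑ i : Fin m, φ S i.castSucc = S.card := by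
        rw [Finset.sum_congr rfl (fun i _ => hφ_cs S i)]
        simp [Finset.sum_ite_mem]
      have h2 : S.card ≤ m := by
        simpa using Finset.card_le_card (Finset.subset_univ S)
      rw [h1, hφ_la]
      omega
    -- good subsets
    set bad2 : Finset (Fin m) := {⟨1, by omega⟩, ⟨2, by omega⟩} with hbad2
    set goodS : Finset (Finset (Fin m)) := Finset.univ.filter (fun S => ¬ S ⊆ bad2) with hgoodS
    set T : Finset (Fin N →₀ ℕ) := goodS.image φ with hT
    -- the target submodule equals the span of monomials over T
    set V := homogeneousSubmodule (Fin N) ℂ m ⊓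
          (⨅ i, vanishingSubmodule (Q i) (m - 1)) ⊓ vanishOnSubmodule W with hV
    have hWzero : ∀ w ∈ W, ∀ j, j ∉ A → w j = 0 := by
      intro w hw j hj
      have hle : W ≤ LinearMap.ker (LinearMap.proj (R := ℂ) (φ := fun _ : Fin N => ℂ) j) := by
        rw [hW, Submodule.span_le]
        rintro - ⟨t, rfl⟩
        simp only [SetLike.mem_coe, LinearMap.mem_ker, LinearMap.proj_apply]
        have : g t ∈ A := by
          fin_cases t <;> simp [hg, hA]
        rw [Pi.single_apply, if_neg]
        intro h
        exact hj (h ▸ this)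
      exact hle hw
    have hspan : V = Submodule.span ℂ ((fun d => (monomial d (1:ℂ))) '' (T : Set _)) := by
      apply le_antisymm
      · -- V ≤ span
        intro F hF
        obtain ⟨⟨hFhom, hFvan⟩, hFW⟩ := hF
        simp only [SetLike.mem_coe] at hFhom hFvan hFW
        rw [mem_homogeneousSubmodule] at hFhom
        have hle_all : ∀ d' ∈ F.support, ∀ i : Fin m, d' i.castSucc ≤ 1 := by
          intro d' hd' i
          have hv : F ∈ vanishingSubmodule (Pi.single i.castSucc 1) (m - 1) :=
            Submodule.mem_iInf _ |>.mp hFvan i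
          exact exponent_le_one (by omega) _ F hFhom hv hd'
        have hsumA : ∀ d' ∈ F.support, (d' : Fin N →₀ ℕ).support ⊆ A →
            d' c1 + d' c2 + d' la = m := by
          intro d' hd' hsub
          have h := degree_sum_eq hFhom hd'
          rw [← Finset.sum_subset (A.subset_univ)
            (fun x _ hx => Finsupp.notMem_support_iff.mp (fun hs => hx (hsub hs)))] at h
          rw [hA, Finset.sum_insert (by simp [hc12, hc1la]),
            Finset.sum_insert (by simp [hc2la]), Finset.sum_singleton] at h
          omega
        -- the four special exponents
        set δ : ℕ → ℕ → (Fin N →₀ ℕ) := fun a b => Finsupp.equivFunOnFinite.symm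
          (fun j => if j = c1 then a else if j = c2 then b else if j = la then m - a - b else 0)
          with hδ
        have hδdef : ∀ a b j, δ a b j =
            if j = c1 then a else if j = c2 then b else if j = la then m - a - b else 0 :=
          fun a b j => rfl
        have hδ_c1 : ∀ a b, δ a b c1 = a := by intro a b; rw [hδdef, if_pos rfl]
        have hδ_c2 : ∀ a b, δ a b c2 = b := by
          intro a b
          rw [hδdef, if_neg (fun h => hc12 h.symm), if_pos rfl]
        have hδ_la : ∀ a b, δ a b la = m - a - b := by
          intro a b
          rw [hδdef, if_neg (fun h => hc1la h.symm), if_neg (fun h => hc2la h.symm), if_pos rfl]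
        have hδ_other : ∀ a b j, j ≠ c1 → j ≠ c2 → j ≠ la → δ a b j = 0 := by
          intro a b j h1 h2 h3
          rw [hδdef, if_neg h1, if_neg h2, if_neg h3]
        have hδ_suppB : ∀ a b (B : Finset (Fin N)), la ∈ B → (a ≠ 0 → c1 ∈ B) →
            (b ≠ 0 → c2 ∈ B) → (δ a b).support ⊆ B := by
          intro a b B hla' h1 h2 j hj
          rw [Finsupp.mem_support_iff] at hj
          rcases eq_or_ne j c1 with rfl | hj1
          · exact h1 (by rwa [hδ_c1] at hj)
          rcases eq_or_ne j c2 with rfl | hj2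
          · exact h2 (by rwa [hδ_c2] at hj)
          rcases eq_or_ne j la with rfl | hj3
          · exact hla'
          · exact absurd (hδ_other a b j hj1 hj2 hj3) hj
        have hclass : ∀ d' ∈ F.support, (d' : Fin N →₀ ℕ).support ⊆ A →
            d' = δ (d' c1) (d' c2) := by
          intro d' hd' hsub
          have hsA := hsumA d' hd' hsub
          ext j
          rcases eq_or_ne j c1 with rfl | hj1
          · rw [hδ_c1]
          rcases eq_or_ne j c2 with rfl | hj2
          · rw [hδ_c2]
          rcases eq_or_ne j la with rfl | hj3
          · rw [hδ_la]; omega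
          · rw [hδ_other _ _ j hj1 hj2 hj3]
            by_contra h0
            have : j ∈ d'.support := Finsupp.mem_support_iff.mpr (fun hz => h0 (by rw [hz]))
            have := hsub this
            rw [hA] at this
            simp only [Finset.mem_insert, Finset.mem_singleton] at this
            tauto
        -- evaluation on indicator vectors of subsets of A
        have hindW : ∀ B : Finset (Fin N), B ⊆ A → ind B ∈ W := by
          intro B hB
          have hind_eq : ind B = ∑ j ∈ B, (Pi.single j 1 : Fin N → ℂ) := by
            funext x
            rw [ind, Finset.sum_apply]
            have : ∀ j ∈ B, (Pi.single j 1 : Fin N → ℂ) x = if x = j then 1 else 0 := by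
              intro j _
              rw [Pi.single_apply]
            rw [Finset.sum_congr rfl this, Finset.sum_ite_eq B x (fun _ => (1:ℂ))]
          rw [hind_eq]
          apply Submodule.sum_mem
          intro j hj
          have hjA := hB hj
          rw [hA] at hjA
          simp only [Finset.mem_insert, Finset.mem_singleton] at hjA
          rcases hjA with rfl | rfl | rfl
          · exact Submodule.subset_span ⟨0, by simp [hg]⟩
          · exact Submodule.subset_span ⟨1, by simp [hg]⟩
          · exact Submodule.subset_span ⟨2, by simp [hg]⟩
        have hstep : ∀ (B : Finset (Fin N)) (t : Finset (Fin N →₀ ℕ)), B ⊆ A →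
            (∀ d' ∈ F.support, (d' : Fin N →₀ ℕ).support ⊆ B → d' ∈ t) →
            (∀ x ∈ t, (x : Fin N →₀ ℕ).support ⊆ B) →
            ∑ x ∈ t, coeff x F = 0 := by
          intro B t hBA hmem hts
          have hzero : aeval (ind B) F = 0 :=
            (mem_vanishOnSubmodule W F).mp hFW (ind B) (hindW B hBA)
          have heval : aeval (ind B) F =
              ∑ d' ∈ F.support.filter (fun d' => (d' : Fin N →₀ ℕ).support ⊆ B), coeff d' F := by
            conv_lhs => rw [F.as_sum, map_sum]
            rw [Finset.sum_filter]
            apply Finset.sum_congr rfl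
            intro d' _
            rw [aeval_ind_monomial]
          rw [heval] at hzero
          rw [← hzero]
          symm
          apply Finset.sum_subset
          · intro x hx
            rw [Finset.mem_filter] at hx
            exact hmem x hx.1 hx.2
          · intro x hxt hxf
            by_contra hcoeff
            apply hxf
            rw [Finset.mem_filter]
            exact ⟨Finsupp.mem_support_iff.mpr hcoeff, hts x hxt⟩
        -- distinctness of the deltas
        have hδ_ne : ∀ a b a' b', a ≠ a' ∨ b ≠ b' → δ a b ≠ δ a' b' := by
          intro a b a' b' hne h
          rcases hne with hne | hne
          · exact hne (by rw [← hδ_c1 a b, ← hδ_c1 a' b', h])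
          · exact hne (by rw [← hδ_c2 a b, ← hδ_c2 a' b', h])
        -- the four coefficient equations
        have h00 : coeff (δ 0 0) F = 0 := by
          have hlaA : ({la} : Finset (Fin N)) ⊆ A := by
            intro x hx
            rw [Finset.mem_singleton] at hx
            subst hx
            rw [hA]
            simp
          have := hstep {la} {δ 0 0} hlaA
            (fun d' hd' hsub => by
              rw [Finset.mem_singleton, hclass d' hd' (hsub.trans hlaA)]
              have h1 : d' c1 = 0 := Finsupp.notMem_support_iff.mp
                (fun h => hc1la (Finset.mem_singleton.mp (hsub h)))
              have h2 : d' c2 = 0 := Finsupp.notMem_support_iff.mp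
                (fun h => hc2la (Finset.mem_singleton.mp (hsub h)))
              rw [h1, h2])
            (fun x hx => by
              rw [Finset.mem_singleton] at hx
              subst hx
              exact hδ_suppB 0 0 {la} (Finset.mem_singleton_self la) (by tauto) (by tauto))
          rwa [Finset.sum_singleton] at this
        have h10 : coeff (δ 1 0) F = 0 := by
          have := hstep {c1, la} {δ 0 0, δ 1 0}
            (by rw [hA]; intro x hx; simp only [Finset.mem_insert, Finset.mem_singleton] at hx ⊢; tauto)
            (fun d' hd' hsub => by
              have hsubA : (d' : Fin N →₀ ℕ).support ⊆ A := hsub.trans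
                (by rw [hA]; intro x hx; simp only [Finset.mem_insert, Finset.mem_singleton] at hx ⊢; tauto)
              have h2 : d' c2 = 0 := Finsupp.notMem_support_iff.mp (fun h => by
                have := hsub h
                simp only [Finset.mem_insert, Finset.mem_singleton] at this
                rcases this with h' | h'
                exacts [hc12 h'.symm, hc2la h'])
              have h1 : d' c1 ≤ 1 := by
                have := hle_all d' hd' ⟨1, by omega⟩
                rwa [← hc1] at this
              rw [Finset.mem_insert, Finset.mem_singleton, hclass d' hd' hsubA, h2]
              interval_cases h : d' c1
              · left; rfl
              · right; rfl)
            (fun x hx => by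
              rw [Finset.mem_insert, Finset.mem_singleton] at hx
              have hla' : la ∈ ({c1, la} : Finset (Fin N)) := by simp
              have hc1' : c1 ∈ ({c1, la} : Finset (Fin N)) := by simp
              rcases hx with rfl | rfl
              · exact hδ_suppB 0 0 _ hla' (by tauto) (by tauto)
              · exact hδ_suppB 1 0 _ hla' (fun _ => hc1') (by tauto))
          rw [Finset.sum_insert (by rw [Finset.mem_singleton]; exact hδ_ne 0 0 1 0 (by tauto)),
            Finset.sum_singleton, h00, zero_add] at this
          exact this
        have h01 : coeff (δ 0 1) F = 0 := by
          have := hstep {c2, la} {δ 0 0, δ 0 1}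
            (by rw [hA]; intro x hx; simp only [Finset.mem_insert, Finset.mem_singleton] at hx ⊢; tauto)
            (fun d' hd' hsub => by
              have hsubA : (d' : Fin N →₀ ℕ).support ⊆ A := hsub.trans
                (by rw [hA]; intro x hx; simp only [Finset.mem_insert, Finset.mem_singleton] at hx ⊢; tauto)
              have h1 : d' c1 = 0 := Finsupp.notMem_support_iff.mp (fun h => by
                have := hsub h
                simp only [Finset.mem_insert, Finset.mem_singleton] at this
                rcases this with h' | h'
                exacts [hc12 h', hc1la h'])
              have h2 : d' c2 ≤ 1 := by
                have := hle_all d' hd' ⟨2, by omega⟩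
                rwa [← hc2] at this
              rw [Finset.mem_insert, Finset.mem_singleton, hclass d' hd' hsubA, h1]
              interval_cases h : d' c2
              · left; rfl
              · right; rfl)
            (fun x hx => by
              rw [Finset.mem_insert, Finset.mem_singleton] at hx
              have hla' : la ∈ ({c2, la} : Finset (Fin N)) := by simp
              have hc2' : c2 ∈ ({c2, la} : Finset (Fin N)) := by simp
              rcases hx with rfl | rfl
              · exact hδ_suppB 0 0 _ hla' (by tauto) (by tauto)
              · exact hδ_suppB 0 1 _ hla' (by tauto) (fun _ => hc2'))
          rw [Finset.sum_insert (by rw [Finset.mem_singleton]; exact hδ_ne 0 0 0 1 (by tauto)),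
            Finset.sum_singleton, h00, zero_add] at this
          exact this
        have h11 : coeff (δ 1 1) F = 0 := by
          have := hstep A {δ 0 0, δ 1 0, δ 0 1, δ 1 1} (le_refl _)
            (fun d' hd' hsub => by
              have h1 : d' c1 ≤ 1 := by
                have := hle_all d' hd' ⟨1, by omega⟩
                rwa [← hc1] at this
              have h2 : d' c2 ≤ 1 := by
                have := hle_all d' hd' ⟨2, by omega⟩
                rwa [← hc2] at this
              simp only [Finset.mem_insert, Finset.mem_singleton]
              rw [hclass d' hd' hsub]
              interval_cases ha : d' c1 <;> interval_cases hb : d' c2 <;> tauto)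
            (fun x hx => by
              simp only [Finset.mem_insert, Finset.mem_singleton] at hx
              have hla' : la ∈ A := by rw [hA]; simp
              have hc1' : c1 ∈ A := by rw [hA]; simp
              have hc2' : c2 ∈ A := by rw [hA]; simp
              rcases hx with rfl | rfl | rfl | rfl
              · exact hδ_suppB 0 0 _ hla' (by tauto) (by tauto)
              · exact hδ_suppB 1 0 _ hla' (fun _ => hc1') (by tauto)
              · exact hδ_suppB 0 1 _ hla' (by tauto) (fun _ => hc2')
              · exact hδ_suppB 1 1 _ hla' (fun _ => hc1') (fun _ => hc2'))
          rw [Finset.sum_insert (by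
              simp only [Finset.mem_insert, Finset.mem_singleton]
              push_neg
              exact ⟨hδ_ne 0 0 1 0 (by tauto), hδ_ne 0 0 0 1 (by tauto), hδ_ne 0 0 1 1 (by tauto)⟩),
            Finset.sum_insert (by
              simp only [Finset.mem_insert, Finset.mem_singleton]
              push_neg
              exact ⟨hδ_ne 1 0 0 1 (by tauto), hδ_ne 1 0 1 1 (by tauto)⟩),
            Finset.sum_insert (by rw [Finset.mem_singleton]; exact hδ_ne 0 1 1 1 (by tauto)),
            Finset.sum_singleton, h00, h10, h01] at this
          simpa using this
        have hsupp : ∀ d ∈ F.support, d ∈ T := by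
          intro d hd
          have hdsum : ∑ j : Fin N, d j = m := degree_sum_eq hFhom hd
          have hdle : ∀ i : Fin m, d i.castSucc ≤ 1 := hle_all d hd
          have hdA : ¬ ((d : Fin N →₀ ℕ).support ⊆ A) := by
            intro hsub
            have hdc1 : d c1 ≤ 1 := by have := hdle ⟨1, by omega⟩; rwa [← hc1] at this
            have hdc2 : d c2 ≤ 1 := by have := hdle ⟨2, by omega⟩; rwa [← hc2] at this
            have hcoeff : coeff d F ≠ 0 := Finsupp.mem_support_iff.mp hd
            apply hcoeff
            rw [hclass d hd hsub]
            interval_cases ha : d c1 <;> interval_cases hb : d c2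
            exacts [h00, h01, h10, h11]
          set S : Finset (Fin m) := Finset.univ.filter (fun i => d i.castSucc = 1) with hS
          have hdcs : ∀ i : Fin m, d i.castSucc = if i ∈ S then 1 else 0 := by
            intro i
            simp only [hS, Finset.mem_filter, Finset.mem_univ, true_and]
            have := hdle i
            split <;> omega
          have hcardS : ∑ i : Fin m, d i.castSucc = S.card := by
            rw [Finset.sum_congr rfl (fun i _ => hdcs i)]
            simp [Finset.sum_ite_mem]
          have hdla : d la = m - S.card := by
            rw [hla]
            rw [Fin.sum_univ_castSucc, hcardS] at hdsum
            omega
          have hφS : φ S = d := by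
            ext j
            rcases Fin.eq_castSucc_or_eq_last j with ⟨i, rfl⟩ | rfl
            · rw [hφ_cs, hdcs]
            · rw [hφ_la, hdla]
          rw [hT, Finset.mem_image]
          refine ⟨S, ?_, hφS⟩
          rw [hgoodS, Finset.mem_filter]
          refine ⟨Finset.mem_univ S, fun hSb => hdA ?_⟩
          intro j hj
          have hjne : d j ≠ 0 := Finsupp.mem_support_iff.mp hj
          rw [hA]
          simp only [Finset.mem_insert, Finset.mem_singleton]
          rcases Fin.eq_castSucc_or_eq_last j with ⟨i, rfl⟩ | rfl
          · have hi1 : d i.castSucc = 1 := by have := hdle i; omega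
            have hiS : i ∈ S := by rw [hS, Finset.mem_filter]; exact ⟨Finset.mem_univ i, hi1⟩
            have := hSb hiS
            rw [hbad2] at this
            simp only [Finset.mem_insert, Finset.mem_singleton] at this
            rcases this with rfl | rfl
            · left; rw [hc1]
            · right; left; rw [hc2]
          · right; right; rfl
        rw [F.as_sum]
        apply Submodule.sum_mem
        intro d hd
        have : monomial d (coeff d F) = coeff d F • monomial d 1 := by
          rw [smul_monomial, smul_eq_mul, mul_one]
        rw [this]
        exact Submodule.smul_mem _ _ (Submodule.subset_span ⟨d, hsupp d hd, rfl⟩)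
      · -- span ≤ V
        rw [Submodule.span_le]
        rintro - ⟨d, hdT, rfl⟩
        rw [hT] at hdT
        simp only [Finset.coe_image, Set.mem_image, Finset.mem_coe] at hdT
        obtain ⟨S, hS, rfl⟩ := hdT
        rw [hgoodS, Finset.mem_filter] at hS
        obtain ⟨-, hSbad⟩ := hS
        refine ⟨⟨?_, ?_⟩, ?_⟩
        · -- homogeneous
          rw [SetLike.mem_coe, mem_homogeneousSubmodule]
          apply isHomogeneous_monomial
          rw [Finsupp.degree_apply]
          rw [Finset.sum_subset (Finset.subset_univ _)
            (fun x _ hx => Finsupp.notMem_support_iff.mp hx)]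
          exact hφ_sum S
        · -- vanishing at each Q i
          rw [SetLike.mem_coe, Submodule.mem_iInf]
          intro i
          apply monomial_mem_vanishing _ _ _ (hφ_sum S)
          rw [hφ_cs]
          split <;> omega
        · -- vanishes on W
          rw [SetLike.mem_coe, mem_vanishOnSubmodule]
          intro w hw
          obtain ⟨i0, hi0S, hi0b⟩ := Finset.not_subset.mp hSbad
          rw [aeval_monomial]
          have hmem : i0.castSucc ∈ (φ S).support := by
            rw [Finsupp.mem_support_iff, hφ_cs, if_pos hi0S]
            norm_num
          have : ((φ S).prod fun i k => w i ^ k) = 0 := by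
            apply Finset.prod_eq_zero hmem
            show w i0.castSucc ^ (φ S) i0.castSucc = 0
            have hna : i0.castSucc ∉ A := by
              rw [hA]
              simp only [Finset.mem_insert, Finset.mem_singleton]
              push_neg
              refine ⟨fun h => hi0b ?_, fun h => hi0b ?_, hcsne i0⟩
              · rw [Fin.castSucc_injective m (h.trans hc1), hbad2]
                simp
              · rw [Fin.castSucc_injective m (h.trans hc2), hbad2]
                simp
            rw [hWzero w hw _ hna]
            exact zero_pow (Finsupp.mem_support_iff.mp hmem)
          rw [this, mul_zero]
    -- dimension count
    have hφinj : Set.InjOn φ goodS := by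
      intro S1 _ S2 _ h
      ext i
      have h2 := congrArg (fun d => d i.castSucc) h
      simp only [hφ_cs] at h2
      by_cases ha : i ∈ S1 <;> by_cases hb : i ∈ S2 <;> simp [ha, hb] at h2 ⊢
    have hcardT : T.card = 2 ^ m - 4 := by
      rw [hT, Finset.card_image_of_injOn hφinj]
      have h4 : (Finset.univ.filter (fun S => S ⊆ bad2)).card = 4 := by
        have : Finset.univ.filter (fun S => S ⊆ bad2) = bad2.powerset := by
          ext S
          simp only [Finset.mem_filter, Finset.mem_powerset, Finset.mem_univ, true_and]
        rw [this, Finset.card_powerset]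
        rw [hbad2]
        rw [Finset.card_insert_of_notMem (by
          simp only [Finset.mem_singleton]
          intro h
          have := congrArg Fin.val h
          simp at this), Finset.card_singleton]
        norm_num
      have htot := Finset.card_filter_add_card_filter_not
        (s := (Finset.univ : Finset (Finset (Fin m)))) (p := fun S => S ⊆ bad2)
      rw [Finset.card_univ, Fintype.card_finset, Fintype.card_fin] at htot
      rw [hgoodS]
      omega
    have hrank : Module.finrank ℂ V = T.card := by
      have hb := (linearIndepOn_id_range_iff (basisMonomials (Fin N) ℂ).injective).mpr (basisMonomials (Fin N) ℂ).linearIndependent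
      have hsub : ↑(T.image (fun d => (monomial d (1:ℂ)))) ⊆
          Set.range (basisMonomials (Fin N) ℂ) := by
        rw [coe_basisMonomials]
        intro x hx
        simp only [Finset.coe_image, Set.mem_image] at hx
        obtain ⟨d, _, rfl⟩ := hx
        exact ⟨d, rfl⟩
      have hs := hb.mono hsub
      rw [hspan, ← Finset.coe_image, finrank_span_finset_eq_card hs,
        Finset.card_image_of_injective _ (monomial_left_injective one_ne_zero)]
    rw [hrank, hcardT]
    have h8 : 4 ≤ 2 ^ m := le_trans (by norm_num) (Nat.pow_le_pow_right (by norm_num) hm)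
    push_cast [h8]
    ring
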